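/- The map J(C) = σ(A,B) = [[B^{-1}, B^{-1}A],[A B^{-1}, A B^{-1}A + B]] from the Siegel upper half space to symmetric matrices is equivariant: for every symplectic S and every C = A + iB ∈ H_d, J(Φ_S(C)) = S J(C) S^T, where Φ_S is the linear fractional action. -/

import Mathlib

open Matrix
set_option linter.unusedSectionVars false
set_option maxHeartbeats 1000000


/-- The standard symplectic matrix `J = [[0, I], [-I, 0]]`. -/
def Jmat (d : ℕ) : Matrix (Fin d ⊕ Fin d) (Fin d ⊕ Fin d) ℝ :=
  Matrix.fromBlocks 0 1 (-1) 0

/-- The generalized linear fractional transformation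
`Φ_S(C) = (S21 + S22 C)(S11 + S12 C)⁻¹`. -/
noncomputable def siegelAction {d : ℕ} (S : Matrix (Fin d ⊕ Fin d) (Fin d ⊕ Fin d) ℝ)
    (C : Matrix (Fin d) (Fin d) ℂ) : Matrix (Fin d) (Fin d) ℂ :=
  (S.toBlocks₂₁.map (Complex.ofReal) + S.toBlocks₂₂.map (Complex.ofReal) * C) *
    (S.toBlocks₁₁.map (Complex.ofReal) + S.toBlocks₁₂.map (Complex.ofReal) * C)⁻¹

/-- The momentum map `J(C) = σ(Re C, Im C) = [[B⁻¹, B⁻¹A],[A B⁻¹, A B⁻¹ A + B]]`,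
with `A = Re C` and `B = Im C`. -/
noncomputable def momMap {d : ℕ} (C : Matrix (Fin d) (Fin d) ℂ) :
    Matrix (Fin d ⊕ Fin d) (Fin d ⊕ Fin d) ℝ :=
  Matrix.fromBlocks (C.map Complex.im)⁻¹
    ((C.map Complex.im)⁻¹ * C.map Complex.re)
    (C.map Complex.re * (C.map Complex.im)⁻¹)
    (C.map Complex.re * (C.map Complex.im)⁻¹ * C.map Complex.re + C.map Complex.im)


section helpers
variable {m : Type*} [Fintype m] [DecidableEq m]

lemma mapC_inv (M : Matrix m m ℝ) :
    (M⁻¹).map (Complex.ofReal) = (M.map Complex.ofReal)⁻¹ := by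
  have hadj := RingHom.map_adjugate Complex.ofRealHom M
  have hdet := RingHom.map_det Complex.ofRealHom M
  simp only [RingHom.mapMatrix_apply] at hadj
  have hc : ⇑Complex.ofRealHom = Complex.ofReal := rfl
  rw [RingHom.mapMatrix_apply] at hdet
  rw [hc] at hadj hdet
  rw [Matrix.inv_def, Matrix.inv_def, ← hadj, ← hdet]
  ext i j
  simp [Matrix.map_apply, Ring.inverse_eq_inv']

lemma mapC_mul {l : Type*} [Fintype l] (M : Matrix m l ℝ) (N : Matrix l m ℝ) :
    (M * N).map (Complex.ofReal) = M.map Complex.ofReal * N.map Complex.ofReal := by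
  ext i j
  simp [Matrix.map_apply, Matrix.mul_apply]

lemma mapC_add {l : Type*} (M N : Matrix m l ℝ) :
    (M + N).map (Complex.ofReal) = M.map Complex.ofReal + N.map Complex.ofReal := by
  ext i j; simp

lemma mapC_transpose {l : Type*} (M : Matrix m l ℝ) :
    (Mᵀ).map (Complex.ofReal) = (M.map Complex.ofReal)ᵀ := by
  ext i j; simp

lemma mapC_conjTranspose {l : Type*} (M : Matrix m l ℝ) :
    (M.map Complex.ofReal)ᴴ = (Mᵀ).map Complex.ofReal := by
  ext i j; simp [conjTranspose_apply, Complex.conj_ofReal]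

lemma mapC_det (M : Matrix m m ℝ) :
    (M.map Complex.ofReal).det = Complex.ofReal M.det := by
  have := RingHom.map_det Complex.ofRealHom M
  rw [RingHom.mapMatrix_apply] at this
  exact this.symm

lemma mapC_one : ((1 : Matrix m m ℝ)).map Complex.ofReal = 1 := by
  ext i j; simp [Matrix.map_apply, Matrix.one_apply, apply_ite]

lemma mapC_neg {l : Type*} (M : Matrix m l ℝ) :
    ((-M).map Complex.ofReal) = -(M.map Complex.ofReal) := by
  ext i j; simp

lemma mapC_zero {l : Type*} : ((0 : Matrix m l ℝ)).map Complex.ofReal = 0 := by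
  ext i j; simp

lemma mapC_inj {l : Type*} : Function.Injective
    (fun M : Matrix m l ℝ => M.map Complex.ofReal) := by
  intro M N h
  ext i j
  have := congrFun (congrFun h i) j
  simpa [Matrix.map_apply] using this
end helpers

variable {d : ℕ}

lemma momMap_eq (Z : Matrix (Fin d) (Fin d) ℂ) (hsym : Zᵀ = Z)
    (hdet : IsUnit ((Z.map Complex.im).map Complex.ofReal).det) :
    (momMap Z).map Complex.ofReal =
      fromBlocks 1 0 Z 0 * fromBlocks ((Z.map Complex.im).map Complex.ofReal)⁻¹ 0 0 0 *
        (fromBlocks 1 0 Z 0)ᴴ +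
      Complex.I • fromBlocks 0 1 (-1) 0 := by
  set Ah := (Z.map Complex.re).map Complex.ofReal with hAh
  set Bh := (Z.map Complex.im).map Complex.ofReal with hBh
  have hZ : Z = Ah + Complex.I • Bh := by
    ext i j
    simp only [hAh, hBh, Matrix.add_apply, Matrix.smul_apply, Matrix.map_apply, smul_eq_mul]
    apply Complex.ext <;> simp
  have hZH : Zᴴ = Ah - Complex.I • Bh := by
    ext i j
    have h1 : Z j i = Z i j := by
      rw [← Matrix.transpose_apply Z i j, hsym]
    simp only [conjTranspose_apply, h1, hAh, hBh, Matrix.sub_apply, Matrix.smul_apply,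
      Matrix.map_apply, smul_eq_mul, RCLike.star_def]
    apply Complex.ext <;> simp
  have hBB : Bh * Bh⁻¹ = 1 := mul_nonsing_inv _ hdet
  have hBB' : Bh⁻¹ * Bh = 1 := nonsing_inv_mul _ hdet
  rw [momMap]
  simp only [Matrix.fromBlocks_map, mapC_add, mapC_mul, mapC_inv, ← hAh, ← hBh]
  simp only [fromBlocks_conjTranspose, fromBlocks_multiply, fromBlocks_smul, fromBlocks_add,
    Matrix.mul_zero, Matrix.zero_mul, add_zero, zero_add, Matrix.mul_one, Matrix.one_mul,
    conjTranspose_one, conjTranspose_zero, smul_zero, hZH]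
  rw [Matrix.fromBlocks_inj]
  refine ⟨rfl, ?_, ?_, ?_⟩
  · rw [Matrix.mul_sub, Matrix.mul_smul, hBB']
    simp
  · conv_rhs => rw [hZ]
    rw [Matrix.add_mul, Matrix.smul_mul, hBB]
    simp
  · have e1 : Ah * Bh⁻¹ * Bh = Ah := by rw [Matrix.mul_assoc, hBB', Matrix.mul_one]
    conv_rhs => rw [hZ]
    simp only [Matrix.add_mul, Matrix.mul_sub, Matrix.smul_mul, Matrix.mul_smul,
      Complex.I_mul_I, Matrix.one_mul, hBB, e1, smul_add, smul_smul,
      neg_smul, one_smul, neg_neg, mul_neg, neg_mul]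
    abel

lemma Jmat_sq (d : ℕ) : Jmat d * Jmat d = -1 := by
  rw [Jmat, fromBlocks_multiply]
  have : (-1 : Matrix (Fin d ⊕ Fin d) (Fin d ⊕ Fin d) ℝ) =
      fromBlocks (-1) (-0) (-0) (-1) := by
    rw [← Matrix.fromBlocks_neg, Matrix.fromBlocks_one]
  rw [this]
  congr 1 <;> simp

lemma symp_transpose {d : ℕ} (S : Matrix (Fin d ⊕ Fin d) (Fin d ⊕ Fin d) ℝ)
    (hS : Sᵀ * Jmat d * S = Jmat d) : S * Jmat d * Sᵀ = Jmat d := by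
  have hJJ := Jmat_sq d
  have hleft : (-(Jmat d) * Sᵀ * Jmat d) * S = 1 := by
    calc (-(Jmat d) * Sᵀ * Jmat d) * S
        = -(Jmat d) * (Sᵀ * Jmat d * S) := by
          simp only [Matrix.mul_assoc]
      _ = -(Jmat d * Jmat d) := by rw [hS, Matrix.neg_mul]
      _ = 1 := by rw [hJJ, neg_neg]
  have hright : S * (-(Jmat d) * Sᵀ * Jmat d) = 1 := mul_eq_one_comm.mp hleft
  have h2 : S * Jmat d * Sᵀ * Jmat d = -1 := by
    have : -(S * Jmat d * Sᵀ * Jmat d) = 1 := by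
      rw [← hright]
      simp only [Matrix.neg_mul, Matrix.mul_neg, Matrix.mul_assoc]
    rw [← neg_neg (S * Jmat d * Sᵀ * Jmat d), this]
  have h4 : S * Jmat d * Sᵀ * (Jmat d * Jmat d) = -Jmat d := by
    have := congrArg (· * Jmat d) h2
    simp only [Matrix.neg_mul, Matrix.one_mul] at this
    simpa only [Matrix.mul_assoc] using this
  rw [hJJ, Matrix.mul_neg, Matrix.mul_one] at h4
  exact neg_injective h4

lemma posdef_complex_ker {d : ℕ} {B : Matrix (Fin d) (Fin d) ℝ} (hB : B.PosDef)
    (x : Fin d → ℂ) (hx : star x ⬝ᵥ (B.map Complex.ofReal) *ᵥ x = 0) : x = 0 := by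
  set xr : Fin d → ℝ := fun i => (x i).re with hxr
  set xi : Fin d → ℝ := fun i => (x i).im with hxi
  have hre : xr ⬝ᵥ B *ᵥ xr + xi ⬝ᵥ B *ᵥ xi = 0 := by
    have h := congrArg Complex.re hx
    simp only [dotProduct, mulVec, Complex.re_sum, Complex.mul_re, Complex.im_sum,
      Complex.mul_im, Pi.star_apply, RCLike.star_def, Complex.conj_re, Complex.conj_im,
      Matrix.map_apply, Complex.ofReal_re, Complex.ofReal_im, zero_mul, sub_zero,
      zero_add, add_zero, neg_mul, neg_neg, sub_neg_eq_add, Complex.zero_re] at h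
    simp only [dotProduct, mulVec]
    rw [← Finset.sum_add_distrib]
    exact h
  have h1 : 0 ≤ xr ⬝ᵥ B *ᵥ xr := by
    have := hB.posSemidef.dotProduct_mulVec_nonneg xr
    simpa using this
  have h2 : 0 ≤ xi ⬝ᵥ B *ᵥ xi := by
    have := hB.posSemidef.dotProduct_mulVec_nonneg xi
    simpa using this
  have hxr0 : xr = 0 := by
    by_contra hne
    have := hB.dotProduct_mulVec_pos hne
    simp only [star_trivial] at this
    linarith
  have hxi0 : xi = 0 := by
    by_contra hne
    have := hB.dotProduct_mulVec_pos hne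
    simp only [star_trivial] at this
    linarith
  funext i
  have e1 : (x i).re = 0 := congrFun hxr0 i
  have e2 : (x i).im = 0 := congrFun hxi0 i
  exact Complex.ext e1 e2

/-- the momentum map `C ↦ σ(A,B)` is equivariant: for every symplectic
`S` and every `C = A + iB` in the Siegel upper half space,
`J(Φ_S(C)) = S J(C) Sᵀ`. -/
theorem momentum_map_equivariant (d : ℕ)
    (S : Matrix (Fin d ⊕ Fin d) (Fin d ⊕ Fin d) ℝ)
    (hS : Sᵀ * Jmat d * S = Jmat d)
    (A B : Matrix (Fin d) (Fin d) ℝ) (hA : A.IsSymm) (hB : B.PosDef) :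
    momMap (siegelAction S
        (A.map (Complex.ofReal) + Complex.I • B.map (Complex.ofReal))) =
      S * momMap (A.map (Complex.ofReal) + Complex.I • B.map (Complex.ofReal)) * Sᵀ := by

  classical
  set Ac := A.map Complex.ofReal with hAc
  set Bc := B.map Complex.ofReal with hBc
  set Cc := Ac + Complex.I • Bc with hCc
  set Sc := S.map Complex.ofReal with hSc
  set Jc : Matrix (Fin d ⊕ Fin d) (Fin d ⊕ Fin d) ℂ := fromBlocks 0 1 (-1) 0 with hJc
  have hJmap : (Jmat d).map Complex.ofReal = Jc := by
    rw [Jmat, Matrix.fromBlocks_map, hJc, mapC_zero, mapC_neg, mapC_one]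
  have hBsym : Bᵀ = B := by
    have := hB.1
    ext i j
    have h := congrFun (congrFun this i) j
    simpa [conjTranspose_apply] using h
  have hCsym : Ccᵀ = Cc := by
    rw [hCc, transpose_add, transpose_smul, hAc, hBc, ← mapC_transpose, ← mapC_transpose,
      hA.eq, hBsym]
  have hCcim : Cc.map Complex.im = B := by
    ext i j; simp [hCc, hAc, hBc, Matrix.map_apply]
  have hdetBc : IsUnit Bc.det := by
    rw [isUnit_iff_ne_zero, hBc, mapC_det]
    simpa using hB.det_pos.ne'
  have hScH : Scᴴ = Scᵀ := by rw [hSc, mapC_conjTranspose, mapC_transpose]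
  have hSymp : Scᵀ * Jc * Sc = Jc := by
    have h := congrArg (fun M : Matrix _ _ ℝ => M.map Complex.ofReal) hS
    simpa only [mapC_mul, mapC_transpose, hJmap, ← hSc] using h
  have hSympT : Sc * Jc * Scᵀ = Jc := by
    have h := congrArg (fun M : Matrix _ _ ℝ => M.map Complex.ofReal)
      (symp_transpose S hS)
    simpa only [mapC_mul, mapC_transpose, hJmap, ← hSc] using h
  set P := S.toBlocks₁₁.map Complex.ofReal with hP
  set Q := S.toBlocks₁₂.map Complex.ofReal with hQ
  set R := S.toBlocks₂₁.map Complex.ofReal with hR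
  set T := S.toBlocks₂₂.map Complex.ofReal with hT
  set M := P + Q * Cc with hM
  set N := R + T * Cc with hN
  have hScBlocks : Sc = fromBlocks P Q R T := by
    rw [hSc, ← Matrix.fromBlocks_toBlocks S, Matrix.fromBlocks_map]
  set Lc : Matrix (Fin d ⊕ Fin d) (Fin d ⊕ Fin d) ℂ :=
    fromBlocks 1 0 Cc 0 with hLc
  have hSL : Sc * Lc = fromBlocks M 0 N 0 := by
    rw [hScBlocks, hLc, fromBlocks_multiply]
    congr 1 <;> simp [hM, hN]
  have hLcH : Lcᴴ = fromBlocks 1 Ccᴴ 0 0 := by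
    rw [hLc, fromBlocks_conjTranspose]
    congr 1 <;> simp
  have hCCH : Cc - Ccᴴ = (2 * Complex.I) • Bc := by
    have hAcH : Acᴴ = Ac := by
      rw [hAc, mapC_conjTranspose, hA.eq]
    have hBcH : Bcᴴ = Bc := by
      rw [hBc, mapC_conjTranspose, hBsym]
    rw [hCc, conjTranspose_add, conjTranspose_smul, hAcH, hBcH]
    simp only [Complex.star_def, Complex.conj_I]
    module
  have hkey1 : Lcᴴ * (Scᵀ * Jc * Sc) * Lc = Lcᴴ * Jc * Lc := by rw [hSymp]
  have hkey2 : Lcᵀ * (Scᵀ * Jc * Sc) * Lc = Lcᵀ * Jc * Lc := by rw [hSymp]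
  have hMN : Mᴴ * N - Nᴴ * M = Cc - Ccᴴ := by
    have h : (Sc * Lc)ᴴ * Jc * (Sc * Lc) = Lcᴴ * Jc * Lc := by
      rw [conjTranspose_mul, hScH]
      simpa only [Matrix.mul_assoc] using hkey1
    rw [hSL, fromBlocks_conjTranspose, hLcH, hJc, hLc] at h
    simp only [fromBlocks_multiply, Matrix.mul_zero, Matrix.zero_mul, Matrix.mul_one,
      Matrix.one_mul, add_zero, zero_add, Matrix.mul_neg, Matrix.neg_mul,
      conjTranspose_zero, conjTranspose_one] at h
    rw [Matrix.fromBlocks_inj] at h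
    obtain ⟨h11, -, -, -⟩ := h
    calc Mᴴ * N - Nᴴ * M = -(Nᴴ * M) + Mᴴ * N := by abel
      _ = -Ccᴴ + Cc := h11
      _ = Cc - Ccᴴ := by abel
  have hMNt : Mᵀ * N = Nᵀ * M := by
    have h : (Sc * Lc)ᵀ * Jc * (Sc * Lc) = Lcᵀ * Jc * Lc := by
      rw [transpose_mul]
      simpa only [Matrix.mul_assoc] using hkey2
    have hLcT : Lcᵀ = fromBlocks 1 Cc 0 0 := by
      rw [hLc, fromBlocks_transpose, hCsym, transpose_one, transpose_zero]
    rw [hSL, fromBlocks_transpose, hLcT, hJc, hLc] at h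
    simp only [fromBlocks_multiply, Matrix.mul_zero, Matrix.zero_mul, Matrix.mul_one,
      Matrix.one_mul, add_zero, zero_add, Matrix.mul_neg, Matrix.neg_mul,
      transpose_zero, transpose_one] at h
    rw [Matrix.fromBlocks_inj] at h
    obtain ⟨h11, -, -, -⟩ := h
    have h2 : -(Nᵀ * M) + Mᵀ * N = 0 := by rw [h11]; abel
    calc Mᵀ * N = Nᵀ * M + (-(Nᵀ * M) + Mᵀ * N) := by abel
      _ = Nᵀ * M := by rw [h2, add_zero]
  have hMdet : IsUnit M.det := by
    rw [isUnit_iff_ne_zero]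
    intro hdet0
    obtain ⟨v, hv, hv0⟩ := (Matrix.exists_mulVec_eq_zero_iff).mpr hdet0
    have hq : star v ⬝ᵥ Bc *ᵥ v = 0 := by
      have h0 : star v ⬝ᵥ ((Mᴴ * N - Nᴴ * M) *ᵥ v) = 0 := by
        rw [Matrix.sub_mulVec, ← Matrix.mulVec_mulVec, ← Matrix.mulVec_mulVec,
          dotProduct_sub]
        have ha : star v ⬝ᵥ Mᴴ *ᵥ (N *ᵥ v) = 0 := by
          rw [Matrix.dotProduct_mulVec, ← Matrix.star_mulVec, hv0]
          simp
        have hb : star v ⬝ᵥ Nᴴ *ᵥ (M *ᵥ v) = 0 := by rw [hv0]; simp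
        rw [ha, hb, sub_zero]
      rw [hMN, hCCH, Matrix.smul_mulVec, dotProduct_smul] at h0
      have h2 : (2 * Complex.I) ≠ 0 := by simp [Complex.I_ne_zero]
      simpa [h2] using h0
    exact hv (posdef_complex_ker hB v hq)
  have hMtdet : IsUnit Mᵀ.det := by rwa [Matrix.det_transpose]
  have hMHdet : IsUnit Mᴴ.det := by
    rw [Matrix.det_conjTranspose, isUnit_iff_ne_zero]
    rw [isUnit_iff_ne_zero] at hMdet
    simpa using hMdet
  set Φ := siegelAction S Cc with hPhidef
  have hPhiNM : Φ = N * M⁻¹ := rfl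
  have hPhiM : Φ * M = N := by
    rw [hPhiNM, Matrix.mul_assoc, nonsing_inv_mul _ hMdet, Matrix.mul_one]
  have hPhiSym : Φᵀ = Φ := by
    rw [hPhiNM, transpose_mul, transpose_nonsing_inv]
    calc Mᵀ⁻¹ * Nᵀ = Mᵀ⁻¹ * (Nᵀ * (M * M⁻¹)) := by
          rw [mul_nonsing_inv _ hMdet, Matrix.mul_one]
      _ = Mᵀ⁻¹ * (Mᵀ * (N * M⁻¹)) := by
          rw [← Matrix.mul_assoc Nᵀ, ← hMNt, Matrix.mul_assoc]
      _ = N * M⁻¹ := by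
          rw [← Matrix.mul_assoc, nonsing_inv_mul _ hMtdet, Matrix.one_mul]
  have hPhiHerm : Φ - Φᴴ = (2 * Complex.I) • (M⁻¹ᴴ * Bc * M⁻¹) := by
    have hInvH : M⁻¹ᴴ * Mᴴ = 1 := by
      rw [← conjTranspose_mul, mul_nonsing_inv _ hMdet, conjTranspose_one]
    have expand : M⁻¹ᴴ * (Mᴴ * N - Nᴴ * M) * M⁻¹ = Φ - Φᴴ := by
      rw [Matrix.mul_sub, Matrix.sub_mul]
      congr 1
      · rw [← Matrix.mul_assoc, hInvH, Matrix.one_mul, hPhiNM]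
      · rw [hPhiNM, conjTranspose_mul, Matrix.mul_assoc M⁻¹ᴴ (Nᴴ * M) M⁻¹,
          Matrix.mul_assoc Nᴴ M M⁻¹, mul_nonsing_inv _ hMdet, Matrix.mul_one]
    rw [← expand, hMN, hCCH, Matrix.mul_smul, Matrix.smul_mul]
  set Bp := M⁻¹ᴴ * Bc * M⁻¹ with hBp
  have h2I : (2 * Complex.I) ≠ 0 := by simp [Complex.I_ne_zero]
  have hImPhi : (Φ.map Complex.im).map Complex.ofReal = Bp := by
    ext i j
    have h : Φ i j - Φᴴ i j = ((2 * Complex.I) • Bp) i j := by rw [← hPhiHerm]; rfl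
    have hsym_entry : Φ j i = Φ i j := by rw [← Matrix.transpose_apply Φ i j, hPhiSym]
    rw [conjTranspose_apply, hsym_entry, Matrix.smul_apply, smul_eq_mul,
      RCLike.star_def, Complex.sub_conj] at h
    have h3 : (2 * Complex.I) * (Complex.ofReal (Φ i j).im) = (2 * Complex.I) * Bp i j := by
      rw [← h]; push_cast; ring
    have h4 := mul_left_cancel₀ h2I h3
    simpa [Matrix.map_apply] using h4
  have hdetBp : IsUnit Bp.det := by
    rw [hBp, Matrix.det_mul, Matrix.det_mul, isUnit_iff_ne_zero]
    rw [isUnit_iff_ne_zero] at hMdet hdetBc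
    have h1 : M⁻¹.det ≠ 0 := by
      rw [Matrix.det_nonsing_inv, Ring.inverse_eq_inv']
      simpa using hMdet
    have h2 : M⁻¹ᴴ.det ≠ 0 := by
      rw [Matrix.det_conjTranspose]
      simpa using h1
    exact mul_ne_zero (mul_ne_zero h2 hdetBc) h1
  have hBpinv : Bp⁻¹ = M * Bc⁻¹ * Mᴴ := by
    have hMH : M⁻¹ᴴ⁻¹ = Mᴴ := by
      rw [Matrix.conjTranspose_nonsing_inv, Matrix.nonsing_inv_nonsing_inv _ hMHdet]
    rw [hBp, Matrix.mul_inv_rev, Matrix.mul_inv_rev, Matrix.nonsing_inv_nonsing_inv _ hMdet,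
      hMH, ← Matrix.mul_assoc]
  have hMomPhi := momMap_eq Φ hPhiSym (by rw [hImPhi]; exact hdetBp)
  have hMomC := momMap_eq Cc hCsym (by rw [hCcim, ← hBc]; exact hdetBc)
  rw [hCcim, ← hBc] at hMomC
  rw [hImPhi] at hMomPhi
  rw [← hLc, ← hJc] at hMomC
  rw [← hJc] at hMomPhi
  have hdist : ∀ X : Matrix (Fin d ⊕ Fin d) (Fin d ⊕ Fin d) ℂ,
      Sc * (X + Complex.I • Jc) * Scᵀ = Sc * X * Scᵀ + Complex.I • Jc := by
    intro X
    rw [Matrix.mul_add, Matrix.add_mul, Matrix.mul_smul, Matrix.smul_mul, hSympT]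
  apply mapC_inj
  show (momMap Φ).map Complex.ofReal = (S * momMap Cc * Sᵀ).map Complex.ofReal
  rw [mapC_mul, mapC_mul, mapC_transpose, ← hSc, hMomPhi, hMomC, hdist]
  congr 1
  have hRHS : Sc * (Lc * fromBlocks Bc⁻¹ 0 0 0 * Lcᴴ) * Scᵀ =
      Sc * Lc * fromBlocks Bc⁻¹ 0 0 0 * (Sc * Lc)ᴴ := by
    rw [conjTranspose_mul, hScH]
    simp only [Matrix.mul_assoc]
  rw [hRHS, hSL, hBpinv, fromBlocks_conjTranspose, fromBlocks_multiply, fromBlocks_multiply,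
    fromBlocks_conjTranspose, fromBlocks_multiply, fromBlocks_multiply]
  simp only [Matrix.mul_zero, Matrix.zero_mul, Matrix.mul_one, Matrix.one_mul,
    add_zero, zero_add, conjTranspose_zero, conjTranspose_one]
  rw [Matrix.fromBlocks_inj]
  refine ⟨rfl, ?_, ?_, ?_⟩
  · rw [← hPhiM, conjTranspose_mul, ← Matrix.mul_assoc]
  · rw [← hPhiM]
    simp only [Matrix.mul_assoc]
  · rw [← hPhiM, conjTranspose_mul]
    simp only [Matrix.mul_assoc]
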